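/- Let κ = (κ_1,…,κ_N) ∈ (0,∞)^N and for j = 1,…,N define T_j f(x) = ∂_j f(x) + κ_j (f(x) - f(x_1,…,x_{j-1},0,x_{j+1},…,x_N))/x_j on analytic functions on ℝ^N. For λ ∈ ℂ^N, the function M_κ(λ,x) = ∏_{j=1}^N M(1, κ_j+1; iλ_j x_j) is the unique analytic solution u of the system T_j u = iλ_j u for all j, with u(0) = 1. -/

import Mathlib

open Complex Filter Topology FormalMultilinearSeries


open Complex Filter Topology

noncomputable def Pc (κ : ℝ) (n : ℕ) : ℂ := (ascPochhammer ℂ n).eval ((κ:ℂ)+1)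

lemma Pc_zero (κ : ℝ) : Pc κ 0 = 1 := by simp [Pc]

lemma Pc_succ (κ : ℝ) (n : ℕ) : Pc κ (n+1) = Pc κ n * ((κ:ℂ)+1+n) := by
  simp [Pc, ascPochhammer_succ_eval]

lemma Pc_norm_ge (κ : ℝ) (hκ : 0 ≤ κ) (n : ℕ) : (n.factorial : ℝ) ≤ ‖Pc κ n‖ := by
  induction n with
  | zero => simp [Pc_zero]
  | succ n ih =>
      rw [Pc_succ, norm_mul, Nat.factorial_succ]
      have h1 : (n+1 : ℝ) ≤ ‖((κ:ℂ)+1+n)‖ := by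
        calc (n+1:ℝ) ≤ κ + 1 + n := by linarith
        _ = ((κ:ℂ)+1+n).re := by simp
        _ ≤ ‖((κ:ℂ)+1+n)‖ := Complex.re_le_norm _
      calc (((n+1) * n.factorial : ℕ) : ℝ) = (n.factorial : ℝ) * (n+1) := by push_cast; ring
      _ ≤ ‖Pc κ n‖ * ‖((κ:ℂ)+1+n)‖ := by
        apply mul_le_mul ih h1 (by positivity) (norm_nonneg _)

lemma Pc_ne_zero (κ : ℝ) (hκ : 0 ≤ κ) (n : ℕ) : Pc κ n ≠ 0 := by
  intro h
  have := Pc_norm_ge κ hκ n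
  rw [h, norm_zero] at this
  have h2 : (0:ℝ) < n.factorial := by positivity
  linarith

noncomputable def fK (κ : ℝ) (z : ℂ) : ℂ := ∑' n : ℕ, z ^ n / Pc κ n

noncomputable def dK (κ : ℝ) (z : ℂ) : ℂ := ∑' n : ℕ, (n:ℂ) * z ^ (n-1) / Pc κ n

lemma norm_term_le (κ : ℝ) (hκ : 0 ≤ κ) (z : ℂ) (n : ℕ) :
    ‖z ^ n / Pc κ n‖ ≤ ‖z‖ ^ n / n.factorial := by
  rw [norm_div, norm_pow]
  have h1 := Pc_norm_ge κ hκ n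
  have h2 : (0:ℝ) < n.factorial := by positivity
  gcongr

lemma summable_fK (κ : ℝ) (hκ : 0 ≤ κ) (z : ℂ) :
    Summable (fun n : ℕ => z ^ n / Pc κ n) := by
  apply Summable.of_norm_bounded (Real.summable_pow_div_factorial ‖z‖)
  exact norm_term_le κ hκ z

lemma hasSum_fK (κ : ℝ) (hκ : 0 ≤ κ) (z : ℂ) :
    HasSum (fun n : ℕ => z ^ n / Pc κ n) (fK κ z) := (summable_fK κ hκ z).hasSum

lemma fK_zero (κ : ℝ) : fK κ 0 = 1 := by
  rw [fK, tsum_eq_single 0 (fun n hn => by simp [zero_pow hn])]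
  simp [Pc_zero]

lemma summable_aux (R : ℝ) : Summable (fun n : ℕ => (n:ℝ) * R ^ (n-1) / n.factorial) := by
  rw [← summable_nat_add_iff 1]
  apply Summable.congr (Real.summable_pow_div_factorial R)
  intro n
  have h2 : (0:ℝ) < n.factorial := by positivity
  field_simp [Nat.factorial_succ]
  rw [Nat.add_sub_cancel, Nat.factorial_succ]; push_cast; ring

lemma summable_dK (κ : ℝ) (hκ : 0 ≤ κ) (z : ℂ) :
    Summable (fun n : ℕ => (n:ℂ) * z ^ (n-1) / Pc κ n) := by
  apply Summable.of_norm_bounded (summable_aux ‖z‖)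
  intro n
  rw [norm_div, norm_mul, norm_pow, Complex.norm_natCast]
  have h1 := Pc_norm_ge κ hκ n
  have h2 : (0:ℝ) < n.factorial := by positivity
  gcongr

lemma hasDerivAt_fK (κ : ℝ) (hκ : 0 ≤ κ) (z : ℂ) :
    HasDerivAt (fK κ) (dK κ z) z := by
  set R : ℝ := ‖z‖ + 1 with hR
  have hzR : z ∈ Metric.ball (0:ℂ) R := by
    simp [hR, Metric.mem_ball, lt_add_of_pos_right]
  have := hasDerivAt_tsum_of_isPreconnected
    (u := fun n : ℕ => (n:ℝ) * R ^ (n-1) / n.factorial)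
    (g := fun (n : ℕ) (y : ℂ) => y ^ n / Pc κ n)
    (g' := fun (n : ℕ) (y : ℂ) => (n:ℂ) * y ^ (n-1) / Pc κ n)
    (summable_aux R) Metric.isOpen_ball (convex_ball (0:ℂ) R).isPreconnected
    ?_ ?_ (Metric.mem_ball_self (by positivity)) (summable_fK κ hκ 0) hzR
  · exact this
  · intro n y hy
    exact (hasDerivAt_pow n y).div_const _
  · intro n y hy
    rw [norm_div, norm_mul, norm_pow, Complex.norm_natCast]
    have h1 := Pc_norm_ge κ hκ n
    have h2 : (0:ℝ) < n.factorial := by positivity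
    have hyR : ‖y‖ ≤ R := by
      rw [Metric.mem_ball, dist_zero_right] at hy; linarith
    have hRpos : (0:ℝ) ≤ R := by positivity
    apply div_le_div₀ (by positivity) ?_ h2 h1
    exact mul_le_mul_of_nonneg_left (pow_le_pow_left₀ (norm_nonneg y) hyR _) (by positivity)

lemma kappa_ne (κ : ℝ) (hκ : 0 ≤ κ) (n : ℕ) : (κ:ℂ) + 1 + n ≠ 0 := by
  intro h
  have : ((κ:ℂ)+1+n).re = 0 := by rw [h]; simp
  simp only [Complex.add_re, Complex.ofReal_re, Complex.one_re, Complex.natCast_re] at this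
  have : (0:ℝ) < κ + 1 + n := by positivity
  linarith

lemma dK_zero (κ : ℝ) : dK κ 0 = ((κ:ℂ)+1)⁻¹ := by
  rw [dK, tsum_eq_single 1]
  · simp [Pc_succ, Pc_zero]
  · intro n hn
    match n, hn with
    | 0, _ => simp
    | (m+2), _ => simp [zero_pow]

lemma ode_fK (κ : ℝ) (hκ : 0 ≤ κ) (z : ℂ) :
    z * dK κ z + κ * fK κ z = κ + z * fK κ z := by
  have hs := summable_fK κ hκ z
  have hd := summable_dK κ hκ z
  have e1 : z * dK κ z = ∑' n : ℕ, (n:ℂ) * z ^ n / Pc κ n := by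
    rw [dK, ← tsum_mul_left]
    apply tsum_congr
    intro n
    match n with
    | 0 => simp
    | (m+1) => rw [Nat.add_sub_cancel]; field_simp; ring
  have hd' : Summable (fun n : ℕ => (n:ℂ) * z ^ n / Pc κ n) := by
    have := hd.mul_left z
    rwa [show (fun n : ℕ => z * ((n:ℂ) * z ^ (n-1) / Pc κ n))
        = fun n : ℕ => (n:ℂ) * z ^ n / Pc κ n from ?_] at this
    funext n
    match n with
    | 0 => simp
    | (m+1) => rw [Nat.add_sub_cancel]; field_simp; ring
  have e2 : κ * fK κ z = ∑' n : ℕ, (κ:ℂ) * (z ^ n / Pc κ n) := by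
    rw [fK, ← tsum_mul_left]
  have e3 : z * dK κ z + κ * fK κ z = ∑' n : ℕ, ((n:ℂ) + κ) * z ^ n / Pc κ n := by
    rw [e1, e2, ← Summable.tsum_add hd' (hs.mul_left _)]
    apply tsum_congr; intro n; ring
  rw [e3]
  have hsum : Summable (fun n : ℕ => ((n:ℂ) + κ) * z ^ n / Pc κ n) := by
    have := hd'.add (hs.mul_left (κ:ℂ))
    apply this.congr
    intro n; ring
  rw [Summable.tsum_eq_zero_add hsum]
  push_cast
  have e4 : ∀ n : ℕ, ((n:ℂ) + 1 + κ) * z ^ (n+1) / Pc κ (n+1)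
      = z * (z ^ n / Pc κ n) := by
    intro n
    rw [Pc_succ]
    have h1 := Pc_ne_zero κ hκ n
    have h2 := kappa_ne κ hκ n
    field_simp
    ring
  rw [tsum_congr e4, tsum_mul_left, ← fK]
  simp [Pc_zero]

lemma analyticAt_fK (κ : ℝ) (hκ : 0 ≤ κ) (z : ℂ) : AnalyticAt ℂ (fK κ) z := by
  set c : ℕ → ℂ := fun n => (Pc κ n)⁻¹ with hc
  have hrad : (ofScalars ℂ c).radius = ⊤ := by
    apply ofScalars_radius_eq_top_of_tendsto
    · filter_upwards with n
      simp [hc, Pc_ne_zero κ hκ n]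
    · have hbound : ∀ n : ℕ, ‖c (n+1)‖ / ‖c n‖ ≤ 1 / (n+1 : ℝ) := by
        intro n
        have h1 : Pc κ n ≠ 0 := Pc_ne_zero κ hκ n
        have h2 := kappa_ne κ hκ n
        rw [hc]
        simp only [norm_inv, Pc_succ, mul_inv, norm_mul]
        rw [div_eq_mul_inv, inv_inv, mul_comm, ← mul_assoc, mul_inv_cancel₀ (by
          simpa using h1), one_mul]
        rw [← one_div]
        apply one_div_le_one_div_of_le (by positivity)
        calc (n+1:ℝ) ≤ κ + 1 + n := by linarith
        _ = ((κ:ℂ)+1+n).re := by simp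
        _ ≤ ‖((κ:ℂ)+1+n)‖ := Complex.re_le_norm _
      apply squeeze_zero (fun n => by positivity) hbound
      exact tendsto_one_div_add_atTop_nhds_zero_nat
  have hball : HasFPowerSeriesOnBall (fK κ) (ofScalars ℂ c) 0 ⊤ := by
    refine ⟨by rw [hrad], by simp, fun {y} _ => ?_⟩
    rw [zero_add]
    apply (hasSum_fK κ hκ y).congr_fun
    intro n
    rw [ofScalars_apply_eq, smul_eq_mul, div_eq_mul_inv, mul_comm]
  exact hball.analyticAt_of_mem (by simp)

lemma uniq_pos (κ : ℝ) (hκ : 0 < κ) (a : ℂ) (h : ℝ → ℂ) (hd : Differentiable ℝ h)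
    (h0 : h 0 = 0) (heq : ∀ t : ℝ, t ≠ 0 → (t:ℂ) * deriv h t = (a * t - κ) * h t) :
    ∀ t : ℝ, 0 < t → h t = 0 := by
  set φ : ℝ → ℂ := fun t => h t * ((t ^ κ : ℝ) : ℂ) * Complex.exp (-(a * t)) with hφ
  have hderiv : ∀ t : ℝ, 0 < t → HasDerivAt φ 0 t := by
    intro t ht
    have Hh : HasDerivAt h (deriv h t) t := (hd t).hasDerivAt
    have Hw : HasDerivAt (fun s : ℝ => s ^ κ) (κ * t ^ (κ-1)) t :=
      Real.hasDerivAt_rpow_const (Or.inl (ne_of_gt ht))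
    have HwC : HasDerivAt (fun s : ℝ => ((s ^ κ : ℝ) : ℂ)) ((κ * t ^ (κ-1) : ℝ) : ℂ) t :=
      Hw.ofReal_comp
    have Hlin : HasDerivAt (fun s : ℝ => -(a * (s:ℂ))) (-a) t := by
      have h1 : HasDerivAt (fun s : ℝ => (s:ℂ)) 1 t := by
        have := Complex.ofRealCLM.hasDerivAt (x := t); simp at this; exact this
      have := (h1.const_mul a).neg; rw [mul_one] at this; exact this
    have He : HasDerivAt (fun s : ℝ => Complex.exp (-(a * s)))
        (Complex.exp (-(a * t)) * (-a)) t := Hlin.cexp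
    have Hprod := (Hh.mul HwC).mul He
    have hval : (deriv h t * ((t ^ κ : ℝ) : ℂ) + h t * ((κ * t ^ (κ-1) : ℝ) : ℂ)) *
        Complex.exp (-(a * t)) + h t * ((t ^ κ : ℝ) : ℂ) * (Complex.exp (-(a * t)) * (-a))
        = 0 := by
      have htne : (t:ℂ) ≠ 0 := by exact_mod_cast ne_of_gt ht
      apply mul_left_cancel₀ htne
      rw [mul_zero]
      have e1 : t * t ^ (κ - 1) = t ^ κ := by
        nth_rewrite 1 [← Real.rpow_one t]
        rw [← Real.rpow_add ht]
        norm_num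
      have e2 := heq t (ne_of_gt ht)
      have : (t:ℂ) * ((deriv h t * ((t ^ κ : ℝ) : ℂ) + h t * ((κ * t ^ (κ-1) : ℝ) : ℂ)) *
          Complex.exp (-(a * t)) + h t * ((t ^ κ : ℝ) : ℂ) * (Complex.exp (-(a * t)) * (-a)))
          = (((t:ℂ) * deriv h t) - (a * t - κ) * h t) * ((t ^ κ : ℝ) : ℂ)
              * Complex.exp (-(a * t))
            + (κ:ℂ) * h t * Complex.exp (-(a * t)) *
              (((t * t ^ (κ-1) : ℝ) : ℂ) - ((t ^ κ : ℝ) : ℂ)) := by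
        push_cast
        ring
      rw [this, e2, e1, sub_self, sub_self]
      ring
    rw [← hval]
    exact Hprod
  have hlim : Tendsto φ (nhdsWithin 0 (Set.Ioi 0)) (nhds 0) := by
    have hc : ContinuousAt φ 0 := by
      apply ContinuousAt.mul
      apply ContinuousAt.mul
      · exact (hd.continuous.continuousAt)
      · exact Complex.continuous_ofReal.continuousAt.comp
          (Real.continuousAt_rpow_const 0 κ (Or.inr (le_of_lt hκ)))
      · exact (Complex.continuous_exp.comp (by fun_prop)).continuousAt
    have hval0 : φ 0 = 0 := by
      simp [hφ, h0]
    rw [← hval0]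
    exact (hc.tendsto).mono_left nhdsWithin_le_nhds
  intro t ht
  -- φ is constant on (0, t]
  have hconst : ∀ s : ℝ, 0 < s → s ≤ t → φ t = φ s := by
    intro s hs hst
    have := constant_of_has_deriv_right_zero (f := φ) (a := s) (b := t)
      (fun y hy => ((hderiv y (lt_of_lt_of_le hs hy.1)).continuousAt).continuousWithinAt)
      (fun y hy => ((hderiv y (lt_of_lt_of_le hs hy.1)).hasDerivWithinAt))
    exact this t ⟨hst, le_refl t⟩
  have hφt : φ t = 0 := by
    have hev : ∀ᶠ s in nhdsWithin 0 (Set.Ioi 0), φ s = φ t := by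
      filter_upwards [Ioc_mem_nhdsGT_of_mem (by exact ⟨le_refl 0, ht⟩ : (0:ℝ) ∈ Set.Ico 0 t)]
        with s hs
      exact (hconst s hs.1 hs.2).symm
    have : Tendsto φ (nhdsWithin 0 (Set.Ioi 0)) (nhds (φ t)) :=
      Tendsto.congr' (by filter_upwards [hev] with s hs using hs.symm) tendsto_const_nhds
    exact tendsto_nhds_unique this hlim
  have hwne : ((t ^ κ : ℝ) : ℂ) ≠ 0 := by
    exact_mod_cast ne_of_gt (Real.rpow_pos_of_pos ht κ)
  have hene : Complex.exp (-(a * t)) ≠ 0 := Complex.exp_ne_zero _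
  have := hφt
  rw [hφ] at this
  simp only [mul_eq_zero] at this
  rcases this with (hh | he)
  · rcases hh with (hh | hw)
    · exact hh
    · exact absurd hw hwne
  · exact absurd he hene

lemma uniq (κ : ℝ) (hκ : 0 < κ) (a : ℂ) (h : ℝ → ℂ) (hd : Differentiable ℝ h)
    (h0 : h 0 = 0) (heq : ∀ t : ℝ, t ≠ 0 → (t:ℂ) * deriv h t = (a * t - κ) * h t) :
    ∀ t : ℝ, h t = 0 := by
  intro t
  rcases lt_trichotomy t 0 with (ht | rfl | ht)
  · have := uniq_pos κ hκ (-a) (fun s => h (-s)) (hd.comp (differentiable_neg))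
      (by simpa using h0) ?_ (-t) (by linarith)
    · simpa using this
    · intro s hs
      have hds : deriv (fun s : ℝ => h (-s)) s = -deriv h (-s) := deriv_comp_neg h s
      rw [hds]
      have := heq (-s) (by simpa using hs)
      push_cast at this ⊢
      linear_combination this
  · exact h0
  · exact uniq_pos κ hκ a h hd h0 heq t ht

/-- The direct-product Dunkl-type operator `T_j`, with the difference quotient
extended by continuity at points where `x_j = 0` (where its value is
`(1 + κ_j) ∂_j u(x)`). -/
noncomputable def Tj {N : ℕ} (κ : Fin N → ℝ) (j : Fin N)
    (u : EuclideanSpace ℝ (Fin N) → ℂ) (x : EuclideanSpace ℝ (Fin N)) : ℂ :=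
  if x j = 0 then
    (1 + (κ j : ℂ)) * fderiv ℝ u x (EuclideanSpace.single j 1)
  else
    fderiv ℝ u x (EuclideanSpace.single j 1) +
      (κ j : ℂ) * (u x - u (WithLp.toLp 2 (Function.update x j 0))) / (x j : ℂ)

section Multi

variable {N : ℕ} (κ : Fin N → ℝ) (lam : Fin N → ℂ)

/-- The coordinate linear functional `x ↦ I * lam j * x j`. -/
noncomputable def Lj (j : Fin N) : EuclideanSpace ℝ (Fin N) →L[ℝ] ℂ :=
  (Complex.I * lam j) • (Complex.ofRealCLM.comp
    (PiLp.proj 2 (fun _ : Fin N => ℝ) j))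

lemma Lj_apply (j : Fin N) (x : EuclideanSpace ℝ (Fin N)) :
    Lj lam j x = Complex.I * lam j * (x j : ℂ) := by
  simp [Lj]

lemma Lj_single (i j : Fin N) :
    Lj lam i (EuclideanSpace.single j 1) = if i = j then Complex.I * lam i else 0 := by
  by_cases h : i = j
  · subst h
    rw [Lj_apply, EuclideanSpace.single_apply, if_pos rfl, if_pos rfl]
    simp
  · rw [Lj_apply, EuclideanSpace.single_apply, if_neg h, if_neg h]
    simp

/-- The candidate solution. -/
noncomputable def UU : EuclideanSpace ℝ (Fin N) → ℂ :=
  fun x => ∏ i, fK (κ i) (Lj lam i x)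

lemma hasFDerivAt_UU (hκ : ∀ j, 0 < κ j) (x : EuclideanSpace ℝ (Fin N)) :
    HasFDerivAt (UU κ lam)
      (∑ i, (∏ k ∈ Finset.univ.erase i, fK (κ k) (Lj lam k x)) •
        ((((1 : ℂ →L[ℂ] ℂ).smulRight (dK (κ i) (Lj lam i x))).restrictScalars ℝ).comp
          (Lj lam i))) x := by
  apply HasFDerivAt.finset_prod
  intro i _
  have h1 : HasFDerivAt (fK (κ i))
      ((1 : ℂ →L[ℂ] ℂ).smulRight (dK (κ i) (Lj lam i x))) (Lj lam i x) :=
    (hasDerivAt_fK (κ i) (hκ i).le _).hasFDerivAt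
  exact (h1.restrictScalars ℝ).comp x (Lj lam i).hasFDerivAt

lemma fderiv_UU (hκ : ∀ j, 0 < κ j) (x : EuclideanSpace ℝ (Fin N)) (j : Fin N) :
    fderiv ℝ (UU κ lam) x (EuclideanSpace.single j 1) =
      (∏ k ∈ Finset.univ.erase j, fK (κ k) (Lj lam k x)) *
        (Complex.I * lam j * dK (κ j) (Lj lam j x)) := by
  rw [(hasFDerivAt_UU κ lam hκ x).fderiv]
  rw [ContinuousLinearMap.sum_apply]
  rw [Finset.sum_eq_single j]
  · simp only [ContinuousLinearMap.smul_apply, ContinuousLinearMap.comp_apply,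
      ContinuousLinearMap.coe_restrictScalars', ContinuousLinearMap.smulRight_apply,
      ContinuousLinearMap.one_apply, Lj_single, if_pos rfl]
    simp only [if_true, smul_eq_mul]
    try ring
  · intro i _ hij
    simp only [ContinuousLinearMap.smul_apply, ContinuousLinearMap.comp_apply,
      ContinuousLinearMap.coe_restrictScalars', ContinuousLinearMap.smulRight_apply,
      ContinuousLinearMap.one_apply, Lj_single, if_neg hij]
    simp
  · intro hj
    exact absurd (Finset.mem_univ j) hj

end Multi

section Multi2

variable {N : ℕ} (κ : Fin N → ℝ) (lam : Fin N → ℂ)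

lemma UU_update (x : EuclideanSpace ℝ (Fin N)) (j : Fin N) :
    UU κ lam (WithLp.toLp 2 (Function.update x j 0)) =
      ∏ k ∈ Finset.univ.erase j, fK (κ k) (Lj lam k x) := by
  rw [UU, ← Finset.mul_prod_erase Finset.univ _ (Finset.mem_univ j)]
  have h1 : Lj lam j (WithLp.toLp 2 (Function.update x j 0)) = 0 := by
    rw [Lj_apply, PiLp.toLp_apply, Function.update_self]
    simp
  rw [h1, fK_zero, one_mul]
  apply Finset.prod_congr rfl
  intro k hk
  have hkj : k ≠ j := (Finset.mem_erase.mp hk).1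
  rw [Lj_apply, Lj_apply, PiLp.toLp_apply, Function.update_of_ne hkj]

lemma Tj_UU (hκ : ∀ j, 0 < κ j) (j : Fin N) (x : EuclideanSpace ℝ (Fin N)) :
    Tj κ j (UU κ lam) x = Complex.I * lam j * UU κ lam x := by
  set P := ∏ k ∈ Finset.univ.erase j, fK (κ k) (Lj lam k x) with hP
  have hUx : UU κ lam x = fK (κ j) (Lj lam j x) * P :=
    (Finset.mul_prod_erase Finset.univ _ (Finset.mem_univ j)).symm
  have hfd := fderiv_UU κ lam hκ x j
  rw [Tj]
  by_cases hx : x j = 0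
  · rw [if_pos hx, hfd]
    have hz : Lj lam j x = 0 := by rw [Lj_apply, hx]; simp
    rw [hz, dK_zero, hUx, hz, fK_zero, one_mul]
    have hne : (κ j : ℂ) + 1 ≠ 0 := by
      have := kappa_ne (κ j) (hκ j).le 0
      simpa using this
    field_simp
    ring
  · rw [if_neg hx, hfd, UU_update, hUx, ← hP]
    have hxne : (x j : ℂ) ≠ 0 := by exact_mod_cast hx
    have hode := ode_fK (κ j) (hκ j).le (Lj lam j x)
    rw [Lj_apply] at hode ⊢
    set z : ℂ := Complex.I * lam j * (x j : ℂ) with hz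
    field_simp
    linear_combination P * hode

end Multi2

section Multi3

variable {N : ℕ} (κ : Fin N → ℝ) (lam : Fin N → ℂ)

lemma analyticAt_UU (hκ : ∀ j, 0 < κ j) (x : EuclideanSpace ℝ (Fin N)) :
    AnalyticAt ℝ (UU κ lam) x := by
  apply Finset.analyticAt_fun_prod
  intro i _
  exact ((analyticAt_fK (κ i) (hκ i).le (Lj lam i x)).restrictScalars).comp
    ((Lj lam i).analyticAt x)

lemma UU_zero : UU κ lam 0 = 1 := by
  rw [UU]
  apply Finset.prod_eq_one
  intro i _
  rw [(Lj lam i).map_zero, fK_zero]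

end Multi3

theorem direct_product_eigenfunction {N : ℕ} (κ : Fin N → ℝ) (hκ : ∀ j, 0 < κ j)
    (lam : Fin N → ℂ) (u : EuclideanSpace ℝ (Fin N) → ℂ) :
    ((∀ x, AnalyticAt ℝ u x) ∧ u 0 = 1 ∧
        (∀ (j : Fin N) (x : EuclideanSpace ℝ (Fin N)),
          Tj κ j u x = Complex.I * lam j * u x)) ↔
      (∀ x : EuclideanSpace ℝ (Fin N), u x =
        ∏ j, ∑' n : ℕ, (Complex.I * lam j * (x j : ℂ)) ^ n /
          (ascPochhammer ℂ n).eval ((κ j : ℂ) + 1)) := by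
  have hUUeq : ∀ x : EuclideanSpace ℝ (Fin N),
      (∏ j, ∑' n : ℕ, (Complex.I * lam j * (x j : ℂ)) ^ n /
        (ascPochhammer ℂ n).eval ((κ j : ℂ) + 1)) = UU κ lam x := by
    intro x
    apply Finset.prod_congr rfl
    intro i _
    rw [Lj_apply]
    rfl
  constructor
  · rintro ⟨hA, h1, hT⟩
    -- Step A : the one-coordinate factorization
    have key : ∀ (x : EuclideanSpace ℝ (Fin N)) (j : Fin N),
        u x = u (WithLp.toLp 2 (Function.update x j 0)) * fK (κ j) (Complex.I * lam j * (x j : ℂ)) := by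
      intro x j
      set e : EuclideanSpace ℝ (Fin N) := EuclideanSpace.single j (1:ℝ) with he
      set A : ℝ → EuclideanSpace ℝ (Fin N) := fun t => WithLp.toLp 2 (Function.update x j t) with hAdef
      have hAeq : ∀ t : ℝ, A t = x + (t - x j) • e := by
        intro t
        ext i
        by_cases hij : i = j
        · subst hij
          simp [hAdef, he, PiLp.add_apply, PiLp.smul_apply, EuclideanSpace.single_apply]
        · simp [hAdef, he, PiLp.add_apply, PiLp.smul_apply, EuclideanSpace.single_apply,
            Function.update_of_ne hij, hij]
      have hA' : ∀ t : ℝ, HasDerivAt A e t := by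
        intro t
        have : HasDerivAt (fun t : ℝ => x + (t - x j) • e) ((1:ℝ) • e) t :=
          (((hasDerivAt_id t).sub_const (x j)).smul_const e).const_add x
        rw [one_smul] at this
        exact this.congr_of_eventuallyEq (Filter.Eventually.of_forall fun s => hAeq s)
      have hg : ∀ t : ℝ, HasDerivAt (fun s => u (A s)) (fderiv ℝ u (A t) e) t := by
        intro t
        exact ((hA (A t)).differentiableAt.hasFDerivAt).comp_hasDerivAt t (hA' t)
      set a : ℂ := Complex.I * lam j with ha
      set c0 : ℂ := u (WithLp.toLp 2 (Function.update x j 0)) with hc0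
      have hm : ∀ t : ℝ, HasDerivAt (fun s : ℝ => fK (κ j) (a * s))
          (a * dK (κ j) (a * t)) t := by
        intro t
        have h2 : HasDerivAt (fun z : ℂ => fK (κ j) (a * z))
            (dK (κ j) (a * (t:ℂ)) * (a * 1)) (t:ℂ) :=
          (hasDerivAt_fK (κ j) (hκ j).le (a * (t:ℂ))).comp (t:ℂ)
            ((hasDerivAt_id (t:ℂ)).const_mul a)
        rw [mul_one, mul_comm (dK (κ j) (a * (t:ℂ))) a] at h2
        exact h2.comp_ofReal
      set h : ℝ → ℂ := fun t => u (A t) - c0 * fK (κ j) (a * t) with hh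
      have hderivh : ∀ t : ℝ, HasDerivAt h
          (fderiv ℝ u (A t) e - c0 * (a * dK (κ j) (a * t))) t := by
        intro t
        exact (hg t).sub ((hm t).const_mul c0)
      have hd : Differentiable ℝ h := fun t => (hderivh t).differentiableAt
      have h0 : h 0 = 0 := by
        have hA0 : A 0 = WithLp.toLp 2 (Function.update x j 0) := rfl
        simp only [hh, hA0, ← hc0]
        have : a * ((0:ℝ):ℂ) = 0 := by push_cast; ring
        rw [this, fK_zero, mul_one, sub_self]
      have heq : ∀ t : ℝ, t ≠ 0 → (t:ℂ) * deriv h t = (a * t - κ j) * h t := by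
        intro t ht
        rw [(hderivh t).deriv]
        have hTj := hT j (A t)
        rw [Tj] at hTj
        have hAtj : (A t) j = t := Function.update_self j t x.ofLp
        rw [if_neg (by rw [hAtj]; exact ht)] at hTj
        have hupd : WithLp.toLp 2 (Function.update (A t) j 0) =
            WithLp.toLp 2 (Function.update x j 0) := by
          ext i
          by_cases hij : i = j
          · subst hij
            simp [hAdef]
          · simp [hAdef, Function.update_of_ne hij]
        rw [hAtj, hupd, ← he, ← hc0] at hTj
        have hode := ode_fK (κ j) (hκ j).le (a * (t:ℂ))
        have htne : (t:ℂ) ≠ 0 := by exact_mod_cast ht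
        rw [hh]
        field_simp at hTj ⊢
        rw [mul_comm (t:ℂ) a]
        linear_combination hTj - c0 * hode
      have := uniq (κ j) (hκ j) a h hd h0 heq (x j)
      simp only [hh] at this
      rw [sub_eq_zero] at this
      have hAx : A (x j) = x := by ext i; simp [hAdef]
      rw [hAx] at this
      exact this
    intro x
    rw [hUUeq x]
    have claim : ∀ k : ℕ, k ≤ N → u x =
        u (WithLp.toLp 2 (fun i : Fin N => if (i:ℕ) < k then (0:ℝ) else x i)) *
        ∏ i ∈ Finset.univ.filter (fun i : Fin N => (i:ℕ) < k),
          fK (κ i) (Complex.I * lam i * (x i : ℂ)) := by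
      intro k
      induction k with
      | zero =>
          intro _
          have hz : WithLp.toLp 2 (fun i : Fin N => if (i:ℕ) < 0 then (0:ℝ) else x i) = x := by
            ext i; simp
          rw [hz]
          simp
      | succ k ih =>
          intro hk
          have hkN : k < N := hk
          have hxk := ih (le_of_lt hkN)
          set j0 : Fin N := ⟨k, hkN⟩ with hj0
          set zk : EuclideanSpace ℝ (Fin N) :=
            WithLp.toLp 2 (fun i : Fin N => if (i:ℕ) < k then (0:ℝ) else x i) with hzk
          have h2 := key zk j0
          have h3 : zk j0 = x j0 := by
            show (if k < k then (0:ℝ) else x j0) = x j0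
            rw [if_neg (lt_irrefl k)]
          have h4 : WithLp.toLp 2 (Function.update zk j0 0) =
              WithLp.toLp 2 (fun i : Fin N => if (i:ℕ) < k+1 then (0:ℝ) else x i) := by
            ext i
            by_cases hij : i = j0
            · subst hij
              simp [hj0]
            · rw [PiLp.toLp_apply, PiLp.toLp_apply, Function.update_of_ne hij]
              have hik : (i:ℕ) ≠ k := fun hh => hij (Fin.ext hh)
              show (if (i:ℕ) < k then (0:ℝ) else x i) = _
              by_cases hlt : (i:ℕ) < k
              · rw [if_pos hlt, if_pos (Nat.lt_succ_of_lt hlt)]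
              · rw [if_neg hlt, if_neg (by omega)]
          have h5 : Finset.univ.filter (fun i : Fin N => (i:ℕ) < k+1)
              = insert j0 (Finset.univ.filter (fun i : Fin N => (i:ℕ) < k)) := by
            ext i
            simp only [Finset.mem_filter, Finset.mem_insert, Finset.mem_univ, true_and,
              hj0, Fin.ext_iff]
            omega
          have h6 : j0 ∉ Finset.univ.filter (fun i : Fin N => (i:ℕ) < k) := by
            simp [hj0]
          rw [h5, Finset.prod_insert h6]
          rw [h3, h4] at h2
          rw [hxk, h2]
          ring
    have hfin := claim N (le_refl N)
    have hz : WithLp.toLp 2 (fun i : Fin N => if (i:ℕ) < N then (0:ℝ) else x i)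
        = (0 : EuclideanSpace ℝ (Fin N)) := by
      ext i
      simp [i.isLt]
    have hf : Finset.univ.filter (fun i : Fin N => (i:ℕ) < N) = Finset.univ := by
      ext i
      simp [i.isLt]
    rw [hz, hf, h1, one_mul] at hfin
    rw [hfin, UU]
    apply Finset.prod_congr rfl
    intro i _
    rw [Lj_apply]
  · intro hU
    have hu : u = UU κ lam := by
      funext x
      rw [hU x, hUUeq x]
    subst hu
    exact ⟨analyticAt_UU κ lam hκ, UU_zero κ lam, Tj_UU κ lam hκ⟩
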